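/- If a connected graph G is contractible to the path P5 (with vertices u1u2u3u4u5) so that the bags corresponding to u2 and u4 induce connected subgraphs of G, then G does not belong to G^cs. -/

import Mathlib

open SimpleGraph
open scoped Classical
set_option linter.unusedSectionVars false

variable {V : Type*} [Fintype V]

noncomputable def setWeight (w : V → ℝ) (A : Set V) : ℝ :=
  ∑ v : V, if v ∈ A then w v else 0

section SW
variable {w : V → ℝ} {A B : Set V}

lemma sw_nonneg (hw : ∀ v, 0 ≤ w v) (A : Set V) : 0 ≤ setWeight w A :=
  Finset.sum_nonneg fun v _ => by by_cases h : v ∈ A <;> simp [h, hw v]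

lemma sw_mono (hw : ∀ v, 0 ≤ w v) (h : A ⊆ B) : setWeight w A ≤ setWeight w B := by
  refine Finset.sum_le_sum fun v _ => ?_
  by_cases hv : v ∈ A
  · simp [hv, h hv]
  · by_cases hv2 : v ∈ B <;> simp [hv, hv2, hw v]

lemma sw_single (hw : ∀ v, 0 ≤ w v) {x : V} (hx : x ∈ A) : w x ≤ setWeight w A := by
  have := Finset.single_le_sum (f := fun v => if v ∈ A then w v else 0)
    (fun v _ => by by_cases h : v ∈ A <;> simp [h, hw v]) (Finset.mem_univ x)
  simpa [hx, setWeight] using this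

lemma sw_pair (hw : ∀ v, 0 ≤ w v) {x y : V} (hx : x ∈ A) (hy : y ∈ A) (hxy : x ≠ y) :
    w x + w y ≤ setWeight w A := by
  classical
  have hsub : ({x, y} : Finset V) ⊆ Finset.univ := Finset.subset_univ _
  have h1 : ∑ v ∈ ({x, y} : Finset V), (if v ∈ A then w v else 0)
      ≤ setWeight w A := by
    refine Finset.sum_le_sum_of_subset_of_nonneg hsub fun v _ _ => ?_
    by_cases h : v ∈ A <;> simp [h, hw v]
  rwa [Finset.sum_pair hxy, if_pos hx, if_pos hy] at h1

lemma sw_triple (hw : ∀ v, 0 ≤ w v) {x y z : V} (hx : x ∈ A) (hy : y ∈ A) (hz : z ∈ A)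
    (hxy : x ≠ y) (hxz : x ≠ z) (hyz : y ≠ z) :
    w x + w y + w z ≤ setWeight w A := by
  classical
  have hsub : ({x, y, z} : Finset V) ⊆ Finset.univ := Finset.subset_univ _
  have h1 : ∑ v ∈ ({x, y, z} : Finset V), (if v ∈ A then w v else 0)
      ≤ setWeight w A := by
    refine Finset.sum_le_sum_of_subset_of_nonneg hsub fun v _ _ => ?_
    by_cases h : v ∈ A <;> simp [h, hw v]
  rw [Finset.sum_insert (by simp [hxy, hxz]), Finset.sum_pair hyz] at h1
  simpa [hx, hy, hz, add_assoc] using h1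

lemma sw_le_card (hb : 0 ≤ b) (h : ∀ v ∈ A, w v ≤ b) :
    setWeight w A ≤ (Fintype.card V : ℝ) * b := by
  have h1 : setWeight w A ≤ ∑ _v : V, b := by
    refine Finset.sum_le_sum fun v _ => ?_
    by_cases hv : v ∈ A
    · simp [hv, h v hv]
    · simp [hv, hb]
  simpa [Finset.card_univ, mul_comm] using h1


lemma ite_nonneg' {P : Prop} [Decidable P] {a : ℝ} (ha : 0 ≤ a) : (0:ℝ) ≤ if P then a else 0 := by
  split <;> simp [ha]

lemma sw_le_one_exc {e : V} {a b : ℝ} (ha : 0 ≤ a) (hb : 0 ≤ b)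
    (he : w e ≤ a) (h : ∀ v ∈ A, v = e ∨ w v ≤ b) :
    setWeight w A ≤ a + (Fintype.card V : ℝ) * b := by
  have h1 : setWeight w A ≤ ∑ v : V, ((if v = e then a else 0) + b) := by
    refine Finset.sum_le_sum fun v _ => ?_
    have hi : (0:ℝ) ≤ if v = e then a else 0 := ite_nonneg' ha
    by_cases hv : v ∈ A
    · simp only [if_pos hv]
      rcases h v hv with rfl | hvb
      · rw [if_pos (rfl : v = v)]; linarith
      · linarith
    · simp only [if_neg hv]; linarith
  rw [Finset.sum_add_distrib, Finset.sum_ite_eq' Finset.univ e fun _ => a] at h1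
  have h2 : ∑ _v : V, b = (Fintype.card V : ℝ) * b := by
    simp [Finset.card_univ, mul_comm]
  rw [h2] at h1
  simp only [Finset.mem_univ, if_pos] at h1
  linarith

lemma sw_le_two_exc {e1 e2 : V} {a1 a2 b : ℝ} (ha1 : 0 ≤ a1) (ha2 : 0 ≤ a2) (hb : 0 ≤ b)
    (he1 : w e1 ≤ a1) (he2 : w e2 ≤ a2)
    (h : ∀ v ∈ A, v = e1 ∨ v = e2 ∨ w v ≤ b) :
    setWeight w A ≤ a1 + a2 + (Fintype.card V : ℝ) * b := by
  have h1 : setWeight w A ≤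
      ∑ v : V, ((if v = e1 then a1 else 0) + ((if v = e2 then a2 else 0) + b)) := by
    refine Finset.sum_le_sum fun v _ => ?_
    have hi1 : (0:ℝ) ≤ if v = e1 then a1 else 0 := ite_nonneg' ha1
    have hi2 : (0:ℝ) ≤ if v = e2 then a2 else 0 := ite_nonneg' ha2
    by_cases hv : v ∈ A
    · simp only [if_pos hv]
      rcases h v hv with rfl | rfl | hvb
      · rw [if_pos (rfl : v = v)]; linarith
      · rw [if_pos (rfl : v = v)]; linarith
      · linarith
    · simp only [if_neg hv]; linarith
  rw [Finset.sum_add_distrib, Finset.sum_add_distrib,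
    Finset.sum_ite_eq' Finset.univ e1 fun _ => a1,
    Finset.sum_ite_eq' Finset.univ e2 fun _ => a2] at h1
  have h2 : ∑ _v : V, b = (Fintype.card V : ℝ) * b := by
    simp [Finset.card_univ, mul_comm]
  rw [h2] at h1
  simp only [Finset.mem_univ, if_pos] at h1
  linarith

end SW

section Graph
variable {G : SimpleGraph V}

lemma reach_mono {A B : Set V} (h : A ⊆ B) {x y : V} (hx : x ∈ A) (hy : y ∈ A)
    (hr : (G.induce A).Reachable ⟨x, hx⟩ ⟨y, hy⟩) :
    (G.induce B).Reachable ⟨x, h hx⟩ ⟨y, h hy⟩ :=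
  hr.map (G.induceHomOfLE h).toHom

lemma crossing {A : Set V} : ∀ {v t : V} (_W : G.Walk v t) (hv : v ∈ A) (_ht : t ∉ A),
    ∃ a b, ∃ ha : a ∈ A, b ∉ A ∧ G.Adj a b ∧ (G.induce A).Reachable ⟨v, hv⟩ ⟨a, ha⟩ := by
  intro v t W
  induction W with
  | nil => intro hv ht; exact absurd hv ht
  | @cons u x t hadj W ih =>
    intro hv ht
    by_cases hx : x ∈ A
    · obtain ⟨a, b, ha, hb, hab, hr⟩ := ih hx ht
      refine ⟨a, b, ha, hb, hab, ?_⟩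
      have hstep : (G.induce A).Adj ⟨u, hv⟩ ⟨x, hx⟩ := by simpa using hadj
      exact hstep.reachable.trans hr
    · exact ⟨u, x, hv, hx, hadj, Reachable.refl _⟩

lemma walk_const {A : Set V} {W' : Type*} {f : V → W'}
    (hstep : ∀ a b : V, a ∈ A → b ∈ A → G.Adj a b → f a = f b) :
    ∀ {x y : ↥A}, (G.induce A).Reachable x y → f ↑x = f ↑y := by
  intro x y h
  obtain ⟨W⟩ := h
  induction W with
  | nil => rfl
  | @cons a b c hadj W ih =>
    have : G.Adj ↑a ↑b := by simpa using hadj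
    exact (hstep ↑a ↑b a.2 b.2 this).trans ih

lemma walk_iv {T : Set V} {φ : V → Fin 5}
    (hstep : ∀ a b : ↥T, (G.induce T).Adj a b → ((φ ↑b) : ℕ) ≤ (φ ↑a) + 1) :
    ∀ {x y : ↥T} (_W : (G.induce T).Walk x y) (k : ℕ),
      ((φ ↑x) : ℕ) ≤ k → k ≤ ((φ ↑y) : ℕ) → ∃ z ∈ T, ((φ z) : ℕ) = k := by
  intro x y W
  induction W with
  | nil =>
    rename_i u
    intro k h1 h2
    exact ⟨↑u, u.2, le_antisymm h1 h2⟩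
  | @cons a b c hadj W ih =>
    intro k h1 h2
    by_cases hk : ((φ ↑a) : ℕ) = k
    · exact ⟨↑a, a.2, hk⟩
    · have hlt : ((φ ↑a) : ℕ) < k := lt_of_le_of_ne h1 hk
      have : ((φ ↑b) : ℕ) ≤ k := le_trans (hstep a b hadj) hlt
      exact ih k this h2

end Graph

def IsComponentOf (G : SimpleGraph V) (S C : Set V) : Prop :=
  ∃ c : (G.induce S).ConnectedComponent,
    C = Subtype.val '' {x : ↥S | (G.induce S).connectedComponentMk x = c}

def Touches (G : SimpleGraph V) (C D : Set V) : Prop :=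
  ∃ a ∈ C, ∃ b ∈ D, G.Adj a b

def IsSafeSet (G : SimpleGraph V) (w : V → ℝ) (S : Set V) : Prop :=
  S.Nonempty ∧ S ≠ Set.univ ∧
    ∀ C D : Set V, IsComponentOf G S C → IsComponentOf G Sᶜ D → Touches G C D →
      setWeight w D ≤ setWeight w C

def IsConnSafeSet (G : SimpleGraph V) (w : V → ℝ) (S : Set V) : Prop :=
  IsSafeSet G w S ∧ (G.induce S).Connected

noncomputable def safeNumber (G : SimpleGraph V) (w : V → ℝ) : ℝ :=
  sInf (setWeight w '' {S | IsSafeSet G w S})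

noncomputable def connSafeNumber (G : SimpleGraph V) (w : V → ℝ) : ℝ :=
  sInf (setWeight w '' {S | IsConnSafeSet G w S})

section DsetSec
variable (G : SimpleGraph V)

def Dset (T : Set V) (v : V) : Set V :=
  {y | ∃ (hy : y ∈ Tᶜ) (hv : v ∈ Tᶜ), (G.induce Tᶜ).Reachable ⟨y, hy⟩ ⟨v, hv⟩}

variable {G} {T : Set V} {v y z : V}

lemma mem_Dset_self (hv : v ∉ T) : v ∈ Dset G T v := ⟨hv, hv, Reachable.refl _⟩

lemma Dset_subset_compl : Dset G T v ⊆ Tᶜ := fun _ hy => hy.1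

lemma mem_Dset_of_adj (hy : y ∈ Dset G T v) (hz : z ∉ T) (hadj : G.Adj z y) :
    z ∈ Dset G T v := by
  obtain ⟨hy', hv', hr⟩ := hy
  refine ⟨hz, hv', Reachable.trans ?_ hr⟩
  exact Adj.reachable (by simpa using hadj)

lemma mem_Dset_of_reach (hz : z ∉ T) (hy : y ∉ T)
    (hr : (G.induce Tᶜ).Reachable ⟨z, hz⟩ ⟨y, hy⟩) (hyD : y ∈ Dset G T v) :
    z ∈ Dset G T v := by
  obtain ⟨hy', hv', hr2⟩ := hyD
  exact ⟨hz, hv', hr.trans hr2⟩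

lemma isComponentOf_Dset (hv : v ∉ T) : IsComponentOf G Tᶜ (Dset G T v) := by
  refine ⟨(G.induce Tᶜ).connectedComponentMk ⟨v, hv⟩, ?_⟩
  ext y
  constructor
  · rintro ⟨hy, hv', hr⟩
    exact ⟨⟨y, hy⟩, ConnectedComponent.sound hr, rfl⟩
  · rintro ⟨⟨y', hy'⟩, hmk, rfl⟩
    exact ⟨hy', hv, ConnectedComponent.exact hmk⟩

lemma isComponentOf_self (hne : T.Nonempty) (hconn : (G.induce T).Connected) :
    IsComponentOf G T T := by
  obtain ⟨t0, ht0⟩ := hne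
  refine ⟨(G.induce T).connectedComponentMk ⟨t0, ht0⟩, ?_⟩
  ext y
  constructor
  · intro hy
    exact ⟨⟨y, hy⟩, ConnectedComponent.sound (hconn.preconnected _ _), rfl⟩
  · rintro ⟨⟨y', hy'⟩, _, rfl⟩
    exact hy'

lemma key_bound {w : V → ℝ} (hG : G.Connected) (hTne : T.Nonempty)
    (hTconn : (G.induce T).Connected)
    (hsafe : ∀ C D : Set V, IsComponentOf G T C → IsComponentOf G Tᶜ D → Touches G C D →
      setWeight w D ≤ setWeight w C)
    (hv : v ∉ T) : setWeight w (Dset G T v) ≤ setWeight w T := by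
  obtain ⟨t0, ht0⟩ := hTne
  obtain ⟨W⟩ := hG.preconnected v t0
  obtain ⟨a, b, ha, hb, hab, hr⟩ := crossing (A := Tᶜ) W hv (by simpa using ht0)
  have haD : a ∈ Dset G T v := ⟨ha, hv, hr.symm⟩
  refine hsafe T (Dset G T v) (isComponentOf_self ⟨t0, ht0⟩ hTconn) (isComponentOf_Dset hv) ?_
  exact ⟨b, not_not.mp hb, a, haD, hab.symm⟩

lemma pair_block {w : V → ℝ} {s p : V}
    (hkey : ∀ u, u ∉ T → setWeight w (Dset G T u) ≤ setWeight w T)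
    (hw : ∀ u, 0 ≤ w u)
    (hs : s ∉ T) (hp : p ∉ T) (hadj : G.Adj s p) (hsp : s ≠ p)
    (h1s : 1 ≤ w s) (h1p : 1 ≤ w p) (hbound : setWeight w T < 2) : False := by
  have hpD : p ∈ Dset G T s := mem_Dset_of_adj (mem_Dset_self hs) hp hadj.symm
  have h2 : w s + w p ≤ setWeight w (Dset G T s) :=
    sw_pair hw (mem_Dset_self hs) hpD hsp
  have := hkey s hs
  linarith

end DsetSec

lemma side_ge (G : SimpleGraph V) {w : V → ℝ} {ε : ℝ}
    (hw : ∀ v, 0 < w v) (hε : 0 < ε)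
    (hN : 1 + ε^2 + (Fintype.card V : ℝ) * ε < 2)
    {B0 B1 B2 : Set V}
    {xs bs us ds : V}
    (hxsB : xs ∈ B1) (hbsB : bs ∈ B0)
    (hxs2 : xs ∉ B2) (hbs2 : bs ∉ B2) (hus2 : us ∉ B2) (hds2 : ds ∉ B2)
    (hadj : G.Adj bs xs) (hxb : xs ≠ bs) (hud : us ≠ ds)
    (hB1conn : (G.induce B1).Connected)
    (hedge12 : ∃ y ∈ B1, ∃ z ∈ B2, G.Adj y z)
    (hwxs : 1 ≤ w xs) (hwbs : 1 ≤ w bs) (hwus1 : 1 ≤ w us) (hwds1 : 1 ≤ w ds)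
    (hwus2 : w us ≤ 1 + ε^2) (hwds2 : w ds ≤ 1 + ε^2)
    (hwB2 : ∀ v ∈ B2, w v = ε)
    (hwsmall : ∀ v : V, v ≠ xs → v ≠ bs → v ≠ us → v ≠ ds → w v ≤ ε)
    {T : Set V}
    (hkey : ∀ u, u ∉ T → setWeight w (Dset G T u) ≤ setWeight w T)
    (hmiss : ∀ v ∈ T, v ∉ B0 ∧ v ∉ B1) :
    2 + ε ≤ setWeight w T := by
  have hw0 : ∀ v, 0 ≤ w v := fun v => (hw v).le
  have hxsT : xs ∉ T := fun h => (hmiss _ h).2 hxsB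
  have hbsT : bs ∉ T := fun h => (hmiss _ h).1 hbsB
  by_cases hz : ∃ z ∈ T, z ∈ B2
  · obtain ⟨z, hzT, hzB2⟩ := hz
    have hwz : w z = ε := hwB2 z hzB2
    by_cases hud' : us ∈ T ∧ ds ∈ T
    · have hzu : us ≠ z := fun h => hus2 (h ▸ hzB2)
      have hzd : ds ≠ z := fun h => hds2 (h ▸ hzB2)
      have h3 := sw_triple hw0 hud'.1 hud'.2 hzT hud hzu hzd
      rw [hwz] at h3
      linarith
    · have hbound : setWeight w T < 2 := by
        rcases not_and_or.mp hud' with husT | hdsT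
        · have hexc : ∀ v ∈ T, v = ds ∨ w v ≤ ε := fun v hvT => by
            by_cases h2 : v = ds
            · exact Or.inl h2
            · refine Or.inr (hwsmall v ?_ ?_ ?_ h2)
              · exact fun h => hxsT (h ▸ hvT)
              · exact fun h => hbsT (h ▸ hvT)
              · exact fun h => husT (h ▸ hvT)
          have := sw_le_one_exc (w := w) (by positivity) hε.le hwds2 hexc
          linarith
        · have hexc : ∀ v ∈ T, v = us ∨ w v ≤ ε := fun v hvT => by
            by_cases h2 : v = us
            · exact Or.inl h2
            · refine Or.inr (hwsmall v ?_ ?_ h2 ?_)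
              · exact fun h => hxsT (h ▸ hvT)
              · exact fun h => hbsT (h ▸ hvT)
              · exact fun h => hdsT (h ▸ hvT)
          have := sw_le_one_exc (w := w) (by positivity) hε.le hwus2 hexc
          linarith
      exact absurd hbound (not_lt.mpr (by
        exfalso
        exact pair_block hkey hw0 hxsT hbsT hadj.symm hxb hwxs hwbs hbound))
  · obtain ⟨y, hyB1, z'', hz''B2, hyz⟩ := hedge12
    have hz''T : z'' ∉ T := fun h => hz ⟨z'', h, hz''B2⟩
    have hyT : y ∉ T := fun h => (hmiss _ h).2 hyB1
    have hB1c : B1 ⊆ Tᶜ := fun u hu huT => (hmiss _ huT).2 hu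
    have hrB1 : (G.induce B1).Reachable ⟨xs, hxsB⟩ ⟨y, hyB1⟩ := hB1conn.preconnected _ _
    have hr : (G.induce Tᶜ).Reachable ⟨xs, hB1c hxsB⟩ ⟨y, hB1c hyB1⟩ :=
      reach_mono hB1c _ _ hrB1
    have hyD : y ∈ Dset G T xs := ⟨hB1c hyB1, hxsT, hr.symm⟩
    have hzD : z'' ∈ Dset G T xs := mem_Dset_of_adj hyD hz''T hyz.symm
    have hbD : bs ∈ Dset G T xs := mem_Dset_of_adj (mem_Dset_self hxsT) hbsT hadj
    have hxD : xs ∈ Dset G T xs := mem_Dset_self hxsT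
    have hzx : xs ≠ z'' := fun h => hxs2 (h ▸ hz''B2)
    have hzb : bs ≠ z'' := fun h => hbs2 (h ▸ hz''B2)
    have h3 := sw_triple hw0 hxD hbD hzD hxb hzx hzb
    have hwz : w z'' = ε := hwB2 z'' hz''B2
    have := hkey xs hxsT
    rw [hwz] at h3
    linarith

lemma mem_comp_image {G : SimpleGraph V} {S : Set V} {c : (G.induce S).ConnectedComponent}
    {y : V} :
    y ∈ (Subtype.val '' {x : ↥S | (G.induce S).connectedComponentMk x = c}) ↔
      ∃ hy : y ∈ S, (G.induce S).connectedComponentMk ⟨y, hy⟩ = c := by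
  constructor
  · rintro ⟨⟨y', hy'⟩, hmk, rfl⟩
    exact ⟨hy', hmk⟩
  · rintro ⟨hy, hmk⟩
    exact ⟨⟨y, hy⟩, hmk, rfl⟩

def InGcs (G : SimpleGraph V) : Prop :=
  ∀ w : V → ℝ, (∀ v, 0 < w v) → safeNumber G w = connSafeNumber G w

def ContractibleTo {W : Type*} (G : SimpleGraph V) (H : SimpleGraph W) (φ : V → W) : Prop :=
  Function.Surjective φ ∧ ∀ i j : W, i ≠ j →
    ((∃ a b : V, φ a = i ∧ φ b = j ∧ G.Adj a b) ↔ H.Adj i j)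

set_option maxHeartbeats 2000000 in
theorem stmt_7 (G : SimpleGraph V) (hG : G.Connected) (φ : V → Fin 5)
    (hφ : ContractibleTo G (pathGraph 5) φ)
    (h2 : (G.induce (φ ⁻¹' {1})).Connected)
    (h4 : (G.induce (φ ⁻¹' {3})).Connected) :
    ¬ InGcs G := by
  classical
  intro hIn
  obtain ⟨hsurj, hedge⟩ := hφ
  -- step fact
  have hadj_step : ∀ a b : V, G.Adj a b → φ a = φ b ∨ (pathGraph 5).Adj (φ a) (φ b) := by
    intro a b hab
    by_cases h : φ a = φ b
    · exact Or.inl h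
    · exact Or.inr ((hedge _ _ h).mp ⟨a, b, rfl, rfl, hab⟩)
  -- special vertices
  obtain ⟨bs, xs, hbs0, hxs1, hadjbx⟩ :=
    (hedge 0 1 (by decide)).mpr (pathGraph_adj.mpr (Or.inl rfl))
  obtain ⟨us, ds, hus3, hds4, hadjud⟩ :=
    (hedge 3 4 (by decide)).mpr (pathGraph_adj.mpr (Or.inl rfl))
  obtain ⟨y12, z12, hy12, hz12, hadjyz⟩ :=
    (hedge 1 2 (by decide)).mpr (pathGraph_adj.mpr (Or.inl rfl))
  obtain ⟨y23, z23, hy23, hz23, hadjyz2⟩ :=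
    (hedge 3 2 (by decide)).mpr (pathGraph_adj.mpr (Or.inr rfl))
  -- pairwise distinctness of the four special vertices
  have fin_ne : ∀ {u v : V} {i j : Fin 5}, φ u = i → φ v = j → i ≠ j → u ≠ v := by
    intro u v i j hu hv hij h
    exact hij (by rw [← hu, ← hv, h])
  have hne_xb : xs ≠ bs := fin_ne hxs1 hbs0 (by decide)
  have hne_xu : xs ≠ us := fin_ne hxs1 hus3 (by decide)
  have hne_xd : xs ≠ ds := fin_ne hxs1 hds4 (by decide)
  have hne_bu : bs ≠ us := fin_ne hbs0 hus3 (by decide)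
  have hne_bd : bs ≠ ds := fin_ne hbs0 hds4 (by decide)
  have hne_ud : us ≠ ds := fin_ne hus3 hds4 (by decide)
  -- numeric setup
  set ε : ℝ := 1 / (4 * (Fintype.card V : ℝ) + 16) with hεdef
  have h4N : (0:ℝ) < 4 * (Fintype.card V:ℝ) + 16 := by positivity
  have hε : 0 < ε := by rw [hεdef]; positivity
  have hNε : (Fintype.card V:ℝ) * ε ≤ 1/4 := by
    rw [hεdef, mul_one_div, div_le_div_iff₀ h4N (by norm_num)]
    linarith
  have hε14 : ε ≤ 1/4 := by
    rw [hεdef, div_le_div_iff₀ h4N (by norm_num)]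
    linarith [Nat.cast_nonneg (α := ℝ) (Fintype.card V)]
  -- the weight function
  set w : V → ℝ := fun v =>
    if v = xs ∨ v = us then 1 + ε^2
    else if v = bs ∨ v = ds then 1
    else if φ v = 2 then ε
    else ε^3 with hwdef
  have hw : ∀ v, 0 < w v := by
    intro v
    rw [hwdef]
    dsimp only
    split_ifs <;> positivity
  have hw0 : ∀ v, 0 ≤ w v := fun v => (hw v).le
  have hwxs : w xs = 1 + ε^2 := by rw [hwdef]; simp
  have hwus : w us = 1 + ε^2 := by rw [hwdef]; simp
  have hwbs : w bs = 1 := by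
    rw [hwdef]
    simp [hne_xb.symm, hne_bu]
  have hwds : w ds = 1 := by
    rw [hwdef]
    simp [hne_xd.symm, hne_ud.symm]
  have hwB2 : ∀ v : V, φ v = 2 → w v = ε := by
    intro v hv
    have h1 : v ≠ xs := fin_ne hv hxs1 (by decide)
    have h2' : v ≠ us := fin_ne hv hus3 (by decide)
    have h3 : v ≠ bs := fin_ne hv hbs0 (by decide)
    have h4' : v ≠ ds := fin_ne hv hds4 (by decide)
    rw [hwdef]
    simp [h1, h2', h3, h4', hv]
  have hwsmall : ∀ v : V, v ≠ xs → v ≠ bs → v ≠ us → v ≠ ds → w v ≤ ε := by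
    intro v h1 h2' h3 h4'
    rw [hwdef]
    simp only [h1, h3, h2', h4', or_self, if_false]
    by_cases h5 : φ v = 2
    · simp [h5]
    · simp only [h5, if_false]
      nlinarith
  have hwmin : ∀ v : V, ε^3 ≤ w v := by
    intro v
    rw [hwdef]
    dsimp only
    split_ifs <;> nlinarith
  -- S0 and its safety
  set S0 : Set V := {v : V | φ v = 1 ∨ φ v = 3} with hS0def
  have hxsS0 : xs ∈ S0 := Or.inl hxs1
  have husS0 : us ∈ S0 := Or.inr hus3
  have hfin024 : ∀ i : Fin 5, i ≠ 1 → i ≠ 3 → i = 0 ∨ i = 2 ∨ i = 4 := by decide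
  -- bag bounds
  have hbag0 : setWeight w {v : V | φ v = 0} ≤ 1 + (Fintype.card V:ℝ) * ε^3 := by
    refine sw_le_one_exc (e := bs) (by norm_num) (by positivity) (le_of_eq hwbs) ?_
    intro v hv
    by_cases h : v = bs
    · exact Or.inl h
    · right
      have h1 : v ≠ xs := fin_ne hv hxs1 (by decide)
      have h2' : v ≠ us := fin_ne hv hus3 (by decide)
      have h4' : v ≠ ds := fin_ne hv hds4 (by decide)
      have h5 : φ v ≠ 2 := by rw [hv]; decide
      rw [hwdef]
      simp [h1, h2', h, h4', h5]
  have hbag4 : setWeight w {v : V | φ v = 4} ≤ 1 + (Fintype.card V:ℝ) * ε^3 := by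
    refine sw_le_one_exc (e := ds) (by norm_num) (by positivity) (le_of_eq hwds) ?_
    intro v hv
    by_cases h : v = ds
    · exact Or.inl h
    · right
      have h1 : v ≠ xs := fin_ne hv hxs1 (by decide)
      have h2' : v ≠ us := fin_ne hv hus3 (by decide)
      have h4' : v ≠ bs := fin_ne hv hbs0 (by decide)
      have h5 : φ v ≠ 2 := by rw [hv]; decide
      rw [hwdef]
      simp [h1, h2', h, h4', h5]
  have hbag2 : setWeight w {v : V | φ v = 2} ≤ (Fintype.card V:ℝ) * ε :=
    sw_le_card hε.le fun v hv => le_of_eq (hwB2 v hv)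
  have hNε3 : (Fintype.card V:ℝ) * ε^3 ≤ ε^2 := by
    nlinarith [mul_le_mul_of_nonneg_right hNε (sq_nonneg ε), sq_nonneg ε]
  -- component bounds
  have hCbound : ∀ C : Set V, IsComponentOf G S0 C → 1 + ε^2 ≤ setWeight w C := by
    rintro C ⟨c, rfl⟩
    obtain ⟨x0, hx0⟩ := c.exists_rep
    have hx0S : (x0 : V) ∈ S0 := x0.2
    rcases hx0S with h1 | h3
    · have hxsC : xs ∈ Subtype.val ''
          {x : ↥S0 | (G.induce S0).connectedComponentMk x = c} := by
        rw [mem_comp_image]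
        refine ⟨hxsS0, ?_⟩
        have hsub : (φ ⁻¹' {1} : Set V) ⊆ S0 := fun u hu => Or.inl hu
        have hr : (G.induce (φ ⁻¹' {1})).Reachable ⟨xs, hxs1⟩ ⟨(x0:V), h1⟩ :=
          h2.preconnected _ _
        have hr2 := reach_mono hsub _ _ hr
        rw [← hx0]
        exact ConnectedComponent.sound hr2
      have := sw_single hw0 hxsC
      rw [hwxs] at this
      exact this
    · have husC : us ∈ Subtype.val ''
          {x : ↥S0 | (G.induce S0).connectedComponentMk x = c} := by
        rw [mem_comp_image]
        refine ⟨husS0, ?_⟩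
        have hsub : (φ ⁻¹' {3} : Set V) ⊆ S0 := fun u hu => Or.inr hu
        have hr : (G.induce (φ ⁻¹' {3})).Reachable ⟨us, hus3⟩ ⟨(x0:V), h3⟩ :=
          h4.preconnected _ _
        have hr2 := reach_mono hsub _ _ hr
        rw [← hx0]
        exact ConnectedComponent.sound hr2
      have := sw_single hw0 husC
      rw [hwus] at this
      exact this
  have hDbound : ∀ D : Set V, IsComponentOf G S0ᶜ D → setWeight w D ≤ 1 + ε^2 := by
    rintro D ⟨d, hDeq⟩
    obtain ⟨y0, hy0⟩ := d.exists_rep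
    have hy0c : (y0:V) ∈ S0ᶜ := y0.2
    have hstepc : ∀ a b : V, a ∈ S0ᶜ → b ∈ S0ᶜ → G.Adj a b → φ a = φ b := by
      intro a b ha hb hab
      rcases hadj_step a b hab with h | h
      · exact h
      · exfalso
        rw [pathGraph_adj] at h
        have ha1 : (φ a).val ≠ 1 := fun hh => ha (Or.inl (Fin.ext hh))
        have ha3 : (φ a).val ≠ 3 := fun hh => ha (Or.inr (Fin.ext hh))
        have hb1 : (φ b).val ≠ 1 := fun hh => hb (Or.inl (Fin.ext hh))
        have hb3 : (φ b).val ≠ 3 := fun hh => hb (Or.inr (Fin.ext hh))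
        have hva := (φ a).isLt
        have hvb := (φ b).isLt
        rcases h with h | h <;> omega
    have hsub : D ⊆ {v : V | φ v = φ (y0:V)} := by
      intro y hy
      rw [hDeq, mem_comp_image] at hy
      obtain ⟨hy', hmk⟩ := hy
      have hr : (G.induce S0ᶜ).Reachable ⟨y, hy'⟩ y0 := by
        rw [← hy0] at hmk
        exact ConnectedComponent.exact hmk
      exact walk_const hstepc hr
    have hy01 : φ (y0:V) ≠ 1 := fun hh => hy0c (Or.inl hh)
    have hy03 : φ (y0:V) ≠ 3 := fun hh => hy0c (Or.inr hh)
    rcases hfin024 _ hy01 hy03 with h0 | h2' | h4'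
    · rw [h0] at hsub
      calc setWeight w D ≤ setWeight w {v : V | φ v = 0} := sw_mono hw0 hsub
        _ ≤ 1 + (Fintype.card V:ℝ) * ε^3 := hbag0
        _ ≤ 1 + ε^2 := by linarith
    · rw [h2'] at hsub
      calc setWeight w D ≤ setWeight w {v : V | φ v = 2} := sw_mono hw0 hsub
        _ ≤ (Fintype.card V:ℝ) * ε := hbag2
        _ ≤ 1 + ε^2 := by nlinarith
    · rw [h4'] at hsub
      calc setWeight w D ≤ setWeight w {v : V | φ v = 4} := sw_mono hw0 hsub
        _ ≤ 1 + (Fintype.card V:ℝ) * ε^3 := hbag4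
        _ ≤ 1 + ε^2 := by linarith
  have hS0safe : IsSafeSet G w S0 := by
    refine ⟨⟨xs, hxsS0⟩, ?_, ?_⟩
    · intro h
      have : z12 ∈ S0 := h ▸ Set.mem_univ z12
      rcases this with h' | h' <;> rw [hz12] at h' <;> exact absurd h' (by decide)
    · intro C D hC hD _
      exact le_trans (hDbound D hD) (hCbound C hC)
  have hS0w : setWeight w S0 ≤ (1+ε^2) + (1+ε^2) + (Fintype.card V:ℝ) * ε^3 := by
    refine sw_le_two_exc (by positivity) (by positivity) (by positivity)
      (le_of_eq hwxs) (le_of_eq hwus) ?_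
    intro v hv
    by_cases h1 : v = xs
    · exact Or.inl h1
    by_cases h2' : v = us
    · exact Or.inr (Or.inl h2')
    right; right
    have hb' : v ≠ bs := by
      rcases hv with h | h
      · exact fin_ne h hbs0 (by decide)
      · exact fin_ne h hbs0 (by decide)
    have hd' : v ≠ ds := by
      rcases hv with h | h
      · exact fin_ne h hds4 (by decide)
      · exact fin_ne h hds4 (by decide)
    have h5 : φ v ≠ 2 := by
      rcases hv with h | h <;> rw [h] <;> decide
    rw [hwdef]
    simp [h1, h2', hb', hd', h5]
  have hN2 : 1 + ε^2 + (Fintype.card V:ℝ) * ε < 2 := by nlinarith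
  -- lower bound for connected safe sets
  have hcs_lb : ∀ T : Set V, IsConnSafeSet G w T → 2 + ε ≤ setWeight w T := by
    intro T hT
    obtain ⟨⟨hTne, hTuniv, hTsafe⟩, hTconn⟩ := hT
    have hkey : ∀ u, u ∉ T → setWeight w (Dset G T u) ≤ setWeight w T := by
      intro u hu
      exact key_bound hG hTne hTconn (fun C D hC hD ht => hTsafe C D hC hD ht) hu
    by_cases hA : ∀ v ∈ T, φ v ≠ 0 ∧ φ v ≠ 1
    · refine side_ge G hw hε hN2 (B0 := φ ⁻¹' {0}) (B1 := φ ⁻¹' {1}) (B2 := φ ⁻¹' {2})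
        hxs1 hbs0 ?_ ?_ ?_ ?_ hadjbx hne_xb hne_ud h2
        ⟨y12, hy12, z12, hz12, hadjyz⟩
        (by rw [hwxs]; nlinarith) hwbs.ge (by rw [hwus]; nlinarith) hwds.ge
        hwus.le (by rw [hwds]; nlinarith) (fun v hv => hwB2 v hv) hwsmall
        hkey (fun v hv => ⟨(hA v hv).1, (hA v hv).2⟩)
      · intro h; rw [Set.mem_preimage, Set.mem_singleton_iff, hxs1] at h; exact absurd h (by decide)
      · intro h; rw [Set.mem_preimage, Set.mem_singleton_iff, hbs0] at h; exact absurd h (by decide)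
      · intro h; rw [Set.mem_preimage, Set.mem_singleton_iff, hus3] at h; exact absurd h (by decide)
      · intro h; rw [Set.mem_preimage, Set.mem_singleton_iff, hds4] at h; exact absurd h (by decide)
    by_cases hB : ∀ v ∈ T, φ v ≠ 4 ∧ φ v ≠ 3
    · refine side_ge G hw hε hN2 (B0 := φ ⁻¹' {4}) (B1 := φ ⁻¹' {3}) (B2 := φ ⁻¹' {2})
        hus3 hds4 ?_ ?_ ?_ ?_ hadjud.symm hne_ud hne_xb h4
        ⟨y23, hy23, z23, hz23, hadjyz2⟩
        (by rw [hwus]; nlinarith) hwds.ge (by rw [hwxs]; nlinarith) hwbs.ge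
        hwxs.le (by rw [hwbs]; nlinarith) (fun v hv => hwB2 v hv)
        (fun v a b c d => hwsmall v c d a b)
        hkey (fun v hv => ⟨(hB v hv).1, (hB v hv).2⟩)
      · intro h; rw [Set.mem_preimage, Set.mem_singleton_iff, hus3] at h; exact absurd h (by decide)
      · intro h; rw [Set.mem_preimage, Set.mem_singleton_iff, hds4] at h; exact absurd h (by decide)
      · intro h; rw [Set.mem_preimage, Set.mem_singleton_iff, hxs1] at h; exact absurd h (by decide)
      · intro h; rw [Set.mem_preimage, Set.mem_singleton_iff, hbs0] at h; exact absurd h (by decide)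
    -- middle case: T meets both sides
    · push_neg at hA hB
      obtain ⟨t1, ht1T, ht1v⟩ := hA
      obtain ⟨t2, ht2T, ht2v⟩ := hB
      -- intermediate value: get a vertex of T in bag 2
      have hstepT : ∀ a b : ↥T, (G.induce T).Adj a b → ((φ ↑b : Fin 5) : ℕ) ≤ (φ ↑a : Fin 5) + 1 := by
        intro a b hab
        have : G.Adj ↑a ↑b := by simpa using hab
        rcases hadj_step _ _ this with h | h
        · rw [h]; omega
        · rw [pathGraph_adj] at h
          rcases h with h | h <;> omega
      obtain ⟨W⟩ := hTconn.preconnected ⟨t1, ht1T⟩ ⟨t2, ht2T⟩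
      obtain ⟨z2, hz2T, hz2v⟩ := walk_iv hstepT W 2
        (by
          by_cases h : φ t1 = 0
          · rw [h]; decide
          · rw [ht1v h]; decide)
        (by
          by_cases h : φ t2 = 4
          · rw [h]; decide
          · rw [ht2v h]; decide)
      have hz2 : φ z2 = 2 := by
        refine Fin.ext ?_
        rw [hz2v]
        decide
      have hwz2 : w z2 = ε := hwB2 z2 hz2
      have hz2x : xs ≠ z2 := fin_ne hxs1 hz2 (by decide)
      have hz2b : bs ≠ z2 := fin_ne hbs0 hz2 (by decide)
      have hz2u : us ≠ z2 := fin_ne hus3 hz2 (by decide)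
      have hz2d : ds ≠ z2 := fin_ne hds4 hz2 (by decide)
      by_cases hL : xs ∈ T ∨ bs ∈ T
      · by_cases hR : us ∈ T ∨ ds ∈ T
        · rcases hL with hl | hl <;> rcases hR with hr | hr
          · have h3 := sw_triple hw0 hl hr hz2T hne_xu hz2x hz2u
            rw [hwz2, hwxs, hwus] at h3
            nlinarith
          · have h3 := sw_triple hw0 hl hr hz2T hne_xd hz2x hz2d
            rw [hwz2, hwxs, hwds] at h3
            nlinarith
          · have h3 := sw_triple hw0 hl hr hz2T hne_bu hz2b hz2u
            rw [hwz2, hwbs, hwus] at h3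
            nlinarith
          · have h3 := sw_triple hw0 hl hr hz2T hne_bd hz2b hz2d
            rw [hwz2, hwbs, hwds] at h3
            nlinarith
        · push_neg at hR
          by_cases hboth : xs ∈ T ∧ bs ∈ T
          · have h3 := sw_triple hw0 hboth.1 hboth.2 hz2T hne_xb hz2x hz2b
            rw [hwz2, hwxs, hwbs] at h3
            nlinarith
          · exfalso
            have hbound : setWeight w T < 2 := by
              rcases not_and_or.mp hboth with hxT | hbT
              · have hexc : ∀ v ∈ T, v = bs ∨ w v ≤ ε := by
                  intro v hv
                  by_cases hvb : v = bs
                  · exact Or.inl hvb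
                  · refine Or.inr (hwsmall v ?_ hvb ?_ ?_)
                    · exact fun h => hxT (h ▸ hv)
                    · exact fun h => hR.1 (h ▸ hv)
                    · exact fun h => hR.2 (h ▸ hv)
                have := sw_le_one_exc (w := w) (a := 1) (by norm_num) hε.le hwbs.le hexc
                nlinarith
              · have hexc : ∀ v ∈ T, v = xs ∨ w v ≤ ε := by
                  intro v hv
                  by_cases hvb : v = xs
                  · exact Or.inl hvb
                  · refine Or.inr (hwsmall v hvb ?_ ?_ ?_)
                    · exact fun h => hbT (h ▸ hv)
                    · exact fun h => hR.1 (h ▸ hv)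
                    · exact fun h => hR.2 (h ▸ hv)
                have := sw_le_one_exc (w := w) (a := 1 + ε^2) (by positivity) hε.le
                  hwxs.le hexc
                nlinarith
            exact pair_block hkey hw0 hR.1 hR.2 hadjud hne_ud
              (by rw [hwus]; nlinarith) hwds.ge hbound
      · push_neg at hL
        by_cases hboth : us ∈ T ∧ ds ∈ T
        · have h3 := sw_triple hw0 hboth.1 hboth.2 hz2T hne_ud hz2u hz2d
          rw [hwz2, hwus, hwds] at h3
          nlinarith
        · exfalso
          have hbound : setWeight w T < 2 := by
            rcases not_and_or.mp hboth with huT | hdT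
            · have hexc : ∀ v ∈ T, v = ds ∨ w v ≤ ε := by
                intro v hv
                by_cases hvb : v = ds
                · exact Or.inl hvb
                · refine Or.inr (hwsmall v ?_ ?_ ?_ hvb)
                  · exact fun h => hL.1 (h ▸ hv)
                  · exact fun h => hL.2 (h ▸ hv)
                  · exact fun h => huT (h ▸ hv)
              have := sw_le_one_exc (w := w) (a := 1) (by norm_num) hε.le hwds.le hexc
              nlinarith
            · have hexc : ∀ v ∈ T, v = us ∨ w v ≤ ε := by
                intro v hv
                by_cases hvb : v = us
                · exact Or.inl hvb
                · refine Or.inr (hwsmall v ?_ ?_ hvb ?_)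
                  · exact fun h => hL.1 (h ▸ hv)
                  · exact fun h => hL.2 (h ▸ hv)
                  · exact fun h => hdT (h ▸ hv)
              have := sw_le_one_exc (w := w) (a := 1 + ε^2) (by positivity) hε.le
                hwus.le hexc
              nlinarith
          exact pair_block hkey hw0 hL.1 hL.2 hadjbx.symm hne_xb
            (by rw [hwxs]; nlinarith) hwbs.ge hbound
  -- final assembly
  have hsafe_mem : setWeight w S0 ∈ setWeight w '' {S : Set V | IsSafeSet G w S} :=
    ⟨S0, hS0safe, rfl⟩
  have hbdd : BddBelow (setWeight w '' {S : Set V | IsSafeSet G w S}) := by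
    refine ⟨0, ?_⟩
    rintro x ⟨S, _, rfl⟩
    exact sw_nonneg hw0 S
  have hs_le : safeNumber G w ≤ setWeight w S0 := by
    unfold safeNumber
    exact csInf_le hbdd hsafe_mem
  have hmlt : setWeight w S0 < 2 + ε := by nlinarith
  have heq := hIn w hw
  have hspos : 0 < safeNumber G w := by
    have h1 : ε^3 ≤ safeNumber G w := by
      unfold safeNumber
      refine le_csInf ⟨_, hsafe_mem⟩ ?_
      rintro x ⟨S, hS, rfl⟩
      obtain ⟨s0, hs0⟩ := hS.1
      exact le_trans (hwmin s0) (sw_single hw0 hs0)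
    have h2' : (0:ℝ) < ε^3 := by positivity
    linarith
  by_cases hcse : (setWeight w '' {S : Set V | IsConnSafeSet G w S}) = ∅
  · rw [connSafeNumber, hcse, Real.sInf_empty] at heq
    linarith
  · have hne' : (setWeight w '' {S : Set V | IsConnSafeSet G w S}).Nonempty :=
      Set.nonempty_iff_ne_empty.mpr hcse
    have hcs_ge : 2 + ε ≤ connSafeNumber G w := by
      unfold connSafeNumber
      refine le_csInf hne' ?_
      rintro x ⟨T, hT, rfl⟩
      exact hcs_lb T hT
    linarith
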